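/- Let 𝒞 be a commutative semiordered algebra with positive unit I satisfying the hypotheses of the real Gelfand–Naimark theorem, and let a ∈ 𝒞 with inf a ≤ x ≤ sup a defining the interval I_a. If a real polynomial P is nonnegative on the segment I_a = [inf a, sup a], then P(a) ∈ 𝒞₊. -/

import Mathlib

open Polynomial

section aux
variable {C : Type*} [CommRing C] [Algebra ℝ C] {Cpos : Set C}

omit [Algebra ℝ C] in
lemma aux_pow_mem (hmul : ∀ x ∈ Cpos, ∀ y ∈ Cpos, x * y ∈ Cpos)
    (hone : (1 : C) ∈ Cpos) {y : C} (hy : y ∈ Cpos) : ∀ k : ℕ, y ^ k ∈ Cpos := by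
  intro k
  induction k with
  | zero => simpa using hone
  | succ k ih => rw [pow_succ]; exact hmul _ ih _ hy

lemma aux_bern_mem (hsmul : ∀ (t : ℝ), 0 ≤ t → ∀ x ∈ Cpos, t • x ∈ Cpos)
    (hmul : ∀ x ∈ Cpos, ∀ y ∈ Cpos, x * y ∈ Cpos)
    (hone : (1 : C) ∈ Cpos) {u : C} (hu : u ∈ Cpos) (hu' : 1 - u ∈ Cpos)
    (n ν : ℕ) : Polynomial.aeval u (bernsteinPolynomial ℝ n ν) ∈ Cpos := by
  have : (Polynomial.aeval u) (bernsteinPolynomial ℝ n ν)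
      = ((n.choose ν : ℝ)) • (u ^ ν * (1 - u) ^ (n - ν)) := by
    simp [bernsteinPolynomial, Nat.cast_smul_eq_nsmul, mul_assoc]
  rw [this]
  exact hsmul _ (by positivity) _
    (hmul _ (aux_pow_mem hmul hone hu ν) _ (aux_pow_mem hmul hone hu' (n - ν)))

end aux

section aux2
variable {C : Type*} [CommRing C] [Algebra ℝ C] {Cpos : Set C}

lemma aux_quad_mem (hadd : ∀ x ∈ Cpos, ∀ y ∈ Cpos, x + y ∈ Cpos)
    (hsmul : ∀ (t : ℝ), 0 ≤ t → ∀ x ∈ Cpos, t • x ∈ Cpos)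
    (hmul : ∀ x ∈ Cpos, ∀ y ∈ Cpos, x * y ∈ Cpos)
    (hone : (1 : C) ∈ Cpos) {u : C} (hu : u ∈ Cpos) (hu' : 1 - u ∈ Cpos)
    {ε : ℝ} (hε : 0 < ε) :
    ((2:ℝ) • u - 1) * ((2:ℝ) • u - 1) + ε • (1:C) ∈ Cpos := by
  set n : ℕ := ⌈1/ε⌉₊ + 2 with hn
  have hn2 : (2:ℝ) ≤ (n:ℝ) := by
    have : (2:ℕ) ≤ n := by omega
    exact_mod_cast this
  have hceil : 1/ε ≤ (⌈1/ε⌉₊ : ℝ) := Nat.le_ceil _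
  have hnR : (n:ℝ) = (⌈1/ε⌉₊ : ℝ) + 2 := by push_cast [hn]; ring
  have hn1 : 1/ε + 1 ≤ (n:ℝ) - 1 := by rw [hnR]; linarith
  have hεn : 1 ≤ ε * ((n:ℝ) - 1) := by
    have h1 : 1/ε ≤ (n:ℝ) - 1 := by linarith
    calc (1:ℝ) = ε * (1/ε) := by field_simp
    _ ≤ ε * ((n:ℝ) - 1) := by
        apply mul_le_mul_of_nonneg_left h1 hε.le
  have hnpos : (0:ℝ) < n := by linarith
  have hn1pos : (0:ℝ) < (n:ℝ) - 1 := by linarith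
  set b : ℕ → C := fun ν => Polynomial.aeval u (bernsteinPolynomial ℝ n ν) with hb
  have hbmem : ∀ ν, b ν ∈ Cpos := fun ν => aux_bern_mem hsmul hmul hone hu hu' n ν
  have cast_eq : ∀ ν : ℕ, ((ν*(ν-1):ℕ):ℝ) = (ν:ℝ)^2 - (ν:ℝ) := by
    intro ν
    cases ν with
    | zero => simp
    | succ k => push_cast [Nat.succ_sub_one]; ring
  have e0 : ∑ ν ∈ Finset.range (n+1), b ν = 1 := by
    have := congrArg (Polynomial.aeval u) (bernsteinPolynomial.sum ℝ n)
    simpa [map_sum] using this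
  have e1 : ∑ ν ∈ Finset.range (n+1), (ν:ℝ) • b ν = (n:ℝ) • u := by
    have := congrArg (Polynomial.aeval u) (bernsteinPolynomial.sum_smul ℝ n)
    simpa [map_sum, Nat.cast_smul_eq_nsmul] using this
  have e2 : ∑ ν ∈ Finset.range (n+1), ((ν:ℝ)^2 - ν) • b ν = ((n:ℝ)^2 - (n:ℝ)) • (u*u) := by
    have h := congrArg (Polynomial.aeval u) (bernsteinPolynomial.sum_mul_smul ℝ n)
    simp only [map_sum, map_nsmul, map_pow, Polynomial.aeval_X] at h
    calc ∑ ν ∈ Finset.range (n+1), ((ν:ℝ)^2 - ν) • b ν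
        = ∑ ν ∈ Finset.range (n+1), (ν*(ν-1)) • b ν := by
          refine Finset.sum_congr rfl fun ν _ => ?_
          rw [← cast_eq ν, Nat.cast_smul_eq_nsmul]
      _ = (n*(n-1)) • (u^2) := h
      _ = ((n:ℝ)^2 - (n:ℝ)) • (u*u) := by
          rw [← Nat.cast_smul_eq_nsmul ℝ, cast_eq, pow_two u]
  set c : ℕ → ℝ := fun ν =>
    (4/((n:ℝ)*((n:ℝ)-1))) * ((ν:ℝ)^2 - ν) + (-4/(n:ℝ)) * ν + (1+ε) with hc
  have hcnn : ∀ ν : ℕ, 0 ≤ c ν := by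
    intro ν
    have h2 : c ν = ((2*(ν:ℝ) - n)^2 - n + ε*((n:ℝ)*((n:ℝ)-1)))/((n:ℝ)*((n:ℝ)-1)) := by
      rw [hc]; field_simp; ring
    rw [h2]
    apply div_nonneg _ (by positivity)
    nlinarith [sq_nonneg (2*(ν:ℝ) - n)]
  have hsum : ∑ ν ∈ Finset.range (n+1), c ν • b ν
      = ((2:ℝ) • u - 1) * ((2:ℝ) • u - 1) + ε • (1:C) := by
    have expand : ∀ ν ∈ Finset.range (n+1), c ν • b ν
        = (4/((n:ℝ)*((n:ℝ)-1))) • (((ν:ℝ)^2 - ν) • b ν)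
          + (-4/(n:ℝ)) • ((ν:ℝ) • b ν) + (1+ε) • b ν := by
      intro ν _
      rw [hc]
      simp only [add_smul, mul_smul]
    rw [Finset.sum_congr rfl expand]
    rw [Finset.sum_add_distrib, Finset.sum_add_distrib, ← Finset.smul_sum, ← Finset.smul_sum,
      ← Finset.smul_sum, e0, e1, e2, smul_smul, smul_smul]
    have c1 : (4/((n:ℝ)*((n:ℝ)-1))) * ((n:ℝ)^2 - (n:ℝ)) = 4 := by field_simp
    have c2 : (-4/(n:ℝ)) * (n:ℝ) = -4 := by field_simp
    rw [c1, c2]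
    simp only [Algebra.smul_def, map_ofNat, map_add, map_one, map_neg, mul_one]
    ring
  rw [← hsum]
  have hzero : (0:C) ∈ Cpos := by simpa using hsmul 0 le_rfl 1 hone
  exact Finset.sum_induction _ (· ∈ Cpos) (fun x y hx hy => hadd x hx y hy) hzero
    (fun ν _ => hsmul _ (hcnn ν) _ (hbmem ν))

end aux2

section aux3
variable {C : Type*} [CommRing C] [Algebra ℝ C] {Cpos : Set C}

lemma aux_sq_mem (hadd : ∀ x ∈ Cpos, ∀ y ∈ Cpos, x + y ∈ Cpos)
    (hsmul : ∀ (t : ℝ), 0 ≤ t → ∀ x ∈ Cpos, t • x ∈ Cpos)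
    (hmul : ∀ x ∈ Cpos, ∀ y ∈ Cpos, x * y ∈ Cpos)
    (hone : (1 : C) ∈ Cpos)
    (hbdd : ∀ a : C, ∃ t : ℝ, 0 < t ∧ t • (1 : C) - a ∈ Cpos ∧ t • (1 : C) + a ∈ Cpos)
    (hline : ∀ a b : C, IsClosed {t : ℝ | a + t • b ∈ Cpos})
    (x : C) : x * x ∈ Cpos := by
  obtain ⟨t, ht, htx1, htx2⟩ := hbdd x
  have h2t : (2*t) ≠ 0 := by positivity
  set u : C := (2*t)⁻¹ • (t • (1:C) + x) with hu
  have humem : u ∈ Cpos := hsmul _ (by positivity) _ htx2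
  have hu1 : (1:C) - u = (2*t)⁻¹ • (t • (1:C) - x) := by
    have key : (2*t)⁻¹ • ((2*t) • (1:C)) = 1 := by
      rw [smul_smul, inv_mul_cancel₀ h2t, one_smul]
    calc (1:C) - (2*t)⁻¹ • (t • (1:C) + x)
        = (2*t)⁻¹ • ((2*t) • (1:C)) - (2*t)⁻¹ • (t • (1:C) + x) := by rw [key]
      _ = (2*t)⁻¹ • ((2*t) • (1:C) - (t • (1:C) + x)) := by rw [smul_sub]
      _ = (2*t)⁻¹ • (t • (1:C) - x) := by
          congr 1
          rw [show (2*t) = t + t by ring, add_smul]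
          abel
  have hu1mem : (1:C) - u ∈ Cpos := by
    rw [hu1]; exact hsmul _ (by positivity) _ htx1
  have hx : x = t • ((2:ℝ) • u - 1) := by
    rw [smul_sub, smul_smul, hu, smul_smul]
    have : t * 2 * (2*t)⁻¹ = 1 := by field_simp
    rw [this, one_smul]
    abel
  have key : ∀ s : ℝ, 0 < s → x * x + s • (1:C) ∈ Cpos := by
    intro s hs
    have hε : 0 < s / t^2 := by positivity
    have hq := aux_quad_mem hadd hsmul hmul hone humem hu1mem hε
    have h1 : t^2 * (s/t^2) = s := by field_simp
    have hyy : x * x = (t^2) • (((2:ℝ) • u - 1) * ((2:ℝ) • u - 1)) := by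
      conv_lhs => rw [hx]
      rw [smul_mul_smul_comm, ← pow_two t]
    have he : x * x + s • (1:C) = (t^2) • (((2:ℝ) • u - 1) * ((2:ℝ) • u - 1) + (s/t^2) • (1:C)) := by
      rw [smul_add, ← hyy, smul_smul, h1]
    rw [he]
    exact hsmul _ (by positivity) _ hq
  have hclosed := hline (x*x) 1
  have hsub : Set.Ioi (0:ℝ) ⊆ {s : ℝ | x*x + s • (1:C) ∈ Cpos} := fun s hs => key s hs
  have h0 : (0:ℝ) ∈ {s : ℝ | x*x + s • (1:C) ∈ Cpos} := by
    have := closure_minimal hsub hclosed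
    apply this
    rw [closure_Ioi]
    exact Set.self_mem_Ici
  simpa using h0

end aux3

open Polynomial

/-- If a real polynomial `P` is nonnegative on the segment `[inf a, sup a]`, then
`P(a)` is a positive element of the semiordered algebra. -/
theorem stmt_7 {C : Type*} [CommRing C] [Algebra ℝ C]
    (Cpos : Set C)
    (hadd : ∀ x ∈ Cpos, ∀ y ∈ Cpos, x + y ∈ Cpos)
    (hsmul : ∀ (t : ℝ), 0 ≤ t → ∀ x ∈ Cpos, t • x ∈ Cpos)
    (hanti : ∀ x : C, x ∈ Cpos → -x ∈ Cpos → x = 0)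
    (hmul : ∀ x ∈ Cpos, ∀ y ∈ Cpos, x * y ∈ Cpos)
    (hone : (1 : C) ∈ Cpos)
    (hbdd : ∀ a : C, ∃ t : ℝ, 0 < t ∧ t • (1 : C) - a ∈ Cpos ∧ t • (1 : C) + a ∈ Cpos)
    (hline : ∀ a b : C, IsClosed {t : ℝ | a + t • b ∈ Cpos})
    (a : C) (m M : ℝ)
    (hm : IsGreatest {t : ℝ | a - t • (1 : C) ∈ Cpos} m)
    (hM : IsLeast {t : ℝ | t • (1 : C) - a ∈ Cpos} M)
    (P : Polynomial ℝ)
    (hP : ∀ x ∈ Set.Icc m M, 0 ≤ P.eval x) :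
    Polynomial.aeval a P ∈ Cpos := by
  classical
  by_cases h01 : (1:C) = 0
  · have : Subsingleton C := subsingleton_of_zero_eq_one h01.symm
    have h : Polynomial.aeval a P = 1 := Subsingleton.elim _ _
    rw [h]; exact hone
  have hzero : (0:C) ∈ Cpos := by simpa using hsmul 0 le_rfl 1 hone
  have hmM : m ≤ M := by
    by_contra hcon
    push_neg at hcon
    have e : (a - m•(1:C)) + (M•(1:C) - a) = (M-m) • (1:C) := by rw [sub_smul]; abel
    have h1 : (M - m) • (1:C) ∈ Cpos := by rw [← e]; exact hadd _ hm.1 _ hM.1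
    have h2 : -((M - m) • (1:C)) ∈ Cpos := by
      rw [← neg_smul, show -(M-m) = m - M by ring]
      exact hsmul _ (by linarith) _ hone
    have h3 := hanti _ h1 h2
    rcases smul_eq_zero.mp h3 with h4 | h4
    · have : M = m := by linarith [sub_eq_zero.mp h4]
      linarith
    · exact h01 h4
  by_cases hmM' : m = M
  · have h1 : -(a - m•(1:C)) ∈ Cpos := by
      rw [neg_sub]
      have := hM.1
      rw [← hmM'] at this
      exact this
    have h2 : a - m•(1:C) = 0 := hanti _ hm.1 h1
    have ha : a = algebraMap ℝ C m := by
      rw [Algebra.algebraMap_eq_smul_one]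
      exact sub_eq_zero.mp h2
    rw [Polynomial.aeval_def, ha, Polynomial.eval₂_at_apply, Algebra.algebraMap_eq_smul_one]
    exact hsmul _ (hP m ⟨le_rfl, hmM⟩) _ hone
  have hlt : m < M := lt_of_le_of_ne hmM hmM'
  have hsq : ∀ x : C, x * x ∈ Cpos := aux_sq_mem hadd hsmul hmul hone hbdd hline
  have hclosnn : ∀ (Q : ℝ[X]) (s : Set ℝ), (∀ x ∈ s, 0 ≤ Q.eval x) →
      ∀ x ∈ closure s, 0 ≤ Q.eval x := by
    intro Q s h x hx
    exact closure_minimal (fun y hy => h y hy)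
      (isClosed_le continuous_const Q.continuous) hx
  have key : ∀ n : ℕ, ∀ Q : ℝ[X], Q.natDegree ≤ n →
      (∀ x ∈ Set.Icc m M, 0 ≤ Q.eval x) → Polynomial.aeval a Q ∈ Cpos := by
    intro n
    induction n using Nat.strong_induction_on with
    | _ n ih =>
    intro Q hdeg hQnn
    by_cases hQ0 : Q = 0
    · rw [hQ0]; simpa using hzero
    by_cases hd0 : Q.natDegree = 0
    · rw [Polynomial.eq_C_of_natDegree_eq_zero hd0, Polynomial.aeval_C,
        Algebra.algebraMap_eq_smul_one]
      refine hsmul _ ?_ _ hone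
      have h := hQnn m ⟨le_rfl, hmM⟩
      rw [Polynomial.eq_C_of_natDegree_eq_zero hd0, Polynomial.eval_C] at h
      exact h
    have hd1 : 1 ≤ Q.natDegree := Nat.one_le_iff_ne_zero.mpr hd0
    have hn1 : 1 ≤ n := le_trans hd1 hdeg
    have hinj : Function.Injective (algebraMap ℝ ℂ) := (algebraMap ℝ ℂ).injective
    have hdegpos : 0 < (Q.map (algebraMap ℝ ℂ)).degree := by
      rw [Polynomial.degree_map_eq_of_injective hinj]
      exact Polynomial.natDegree_pos_iff_degree_pos.mp hd1
    obtain ⟨z, hz⟩ := Complex.exists_root hdegpos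
    have hza : Polynomial.aeval z Q = 0 := by
      rwa [Polynomial.aeval_def, ← Polynomial.eval_map]
    have haα : ∀ β : ℝ, Polynomial.aeval a (X - Polynomial.C β) = a - β • (1:C) := by
      intro β
      simp [Algebra.algebraMap_eq_smul_one]
    by_cases him : z.im = 0
    · -- real root
      set α := z.re with hα
      have hroot : Q.IsRoot α := by
        have hz' : z = ((α : ℝ) : ℂ) := by
          apply Complex.ext <;> simp [hα, him]
        rw [hz', show ((α:ℝ):ℂ) = algebraMap ℝ ℂ α from rfl, Polynomial.aeval_def,
          Polynomial.eval₂_at_apply] at hza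
        exact hinj (hza.trans (map_zero _).symm)
      obtain ⟨R, hR⟩ := Polynomial.dvd_iff_isRoot.mpr hroot
      have hRne : R ≠ 0 := by
        rintro rfl
        rw [mul_zero] at hR
        exact hQ0 hR
      have hXαne : (X - Polynomial.C α : ℝ[X]) ≠ 0 := Polynomial.X_sub_C_ne_zero α
      have hdegR : R.natDegree = Q.natDegree - 1 := by
        rw [hR, Polynomial.natDegree_mul hXαne hRne, Polynomial.natDegree_X_sub_C]
        omega
      have hRlt : R.natDegree < n := by omega
      rcases le_or_gt α m with hαm | hαm
      · -- root left of the interval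
        have hRIoc : ∀ x ∈ Set.Ioc m M, 0 ≤ R.eval x := by
          intro x hx
          have h0 := hQnn x (Set.Ioc_subset_Icc_self hx)
          rw [hR, Polynomial.eval_mul, Polynomial.eval_sub, Polynomial.eval_X,
            Polynomial.eval_C] at h0
          have hpos : 0 < x - α := by have := hx.1; linarith
          exact (mul_nonneg_iff_of_pos_left hpos).mp h0
        have hRnn : ∀ x ∈ Set.Icc m M, 0 ≤ R.eval x := by
          intro x hx
          have h := hclosnn R (Set.Ioc m M) hRIoc x
          rw [closure_Ioc hlt.ne] at h
          exact h hx
        rw [hR, map_mul]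
        refine hmul _ ?_ _ (ih R.natDegree hRlt R le_rfl hRnn)
        rw [haα α, show a - α•(1:C) = (a - m•(1:C)) + (m - α)•(1:C) by rw [sub_smul]; abel]
        exact hadd _ hm.1 _ (hsmul _ (by linarith) _ hone)
      · rcases le_or_gt M α with hMα | hαM
        · -- root right of the interval
          have hSIco : ∀ x ∈ Set.Ico m M, 0 ≤ (-R).eval x := by
            intro x hx
            have h0 := hQnn x (Set.Ico_subset_Icc_self hx)
            rw [hR, Polynomial.eval_mul, Polynomial.eval_sub, Polynomial.eval_X,
              Polynomial.eval_C] at h0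
            have hpos : 0 < α - x := by have := hx.2; linarith
            rw [Polynomial.eval_neg]
            have h1 : 0 ≤ (α - x) * (-(R.eval x)) := by nlinarith
            exact (mul_nonneg_iff_of_pos_left hpos).mp h1
          have hSnn : ∀ x ∈ Set.Icc m M, 0 ≤ (-R).eval x := by
            intro x hx
            have h := hclosnn (-R) (Set.Ico m M) hSIco x
            rw [closure_Ico hlt.ne] at h
            exact h hx
          have hR' : Q = (Polynomial.C α - X) * (-R) := by rw [hR]; ring
          rw [hR', map_mul]
          refine hmul _ ?_ _ (ih R.natDegree hRlt (-R)
            (by rw [Polynomial.natDegree_neg]) hSnn)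
          have e2 : Polynomial.aeval a (Polynomial.C α - X)
              = (M•(1:C) - a) + (α - M)•(1:C) := by
            simp only [map_sub, Polynomial.aeval_C, Polynomial.aeval_X,
              Algebra.algebraMap_eq_smul_one]
            rw [sub_smul]
            abel
          rw [e2]
          exact hadd _ hM.1 _ (hsmul _ (by linarith) _ hone)
        · -- root inside the open interval: double root
          have hmin : IsLocalMin (fun x => Q.eval x) α := by
            have hO : Set.Ioo m M ∈ nhds α := Ioo_mem_nhds hαm hαM
            refine Filter.eventually_of_mem hO fun x hx => ?_
            have := hQnn x (Set.Ioo_subset_Icc_self hx)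
            simpa [hroot.eq_zero] using this
          have hder : Q.derivative.eval α = 0 := by
            have h1 := hmin.deriv_eq_zero
            rwa [Polynomial.deriv] at h1
          have hRα : R.IsRoot α := by
            have h2 : Q.derivative = R + (X - Polynomial.C α) * R.derivative := by
              rw [hR, Polynomial.derivative_mul, Polynomial.derivative_sub,
                Polynomial.derivative_X, Polynomial.derivative_C]
              ring
            have h3 : Q.derivative.eval α = R.eval α := by rw [h2]; simp
            show R.eval α = 0
            rw [← h3]; exact hder
          obtain ⟨S, hS⟩ := Polynomial.dvd_iff_isRoot.mpr hRα
          have hQS : Q = (X - Polynomial.C α)^2 * S := by rw [hR, hS]; ring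
          have hSne : S ≠ 0 := by
            rintro rfl; rw [mul_zero] at hQS; exact hQ0 hQS
          have hpow2ne : ((X - Polynomial.C α)^2 : ℝ[X]) ≠ 0 := pow_ne_zero 2 hXαne
          have hdegQS : Q.natDegree = 2 * 1 + S.natDegree := by
            rw [hQS, Polynomial.natDegree_mul hpow2ne hSne, Polynomial.natDegree_pow,
              Polynomial.natDegree_X_sub_C]
          have hSlt : S.natDegree < n := by omega
          have hSIcc' : ∀ x ∈ Set.Icc m M, x ≠ α → 0 ≤ S.eval x := by
            intro x hx hxα
            have h0 := hQnn x hx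
            rw [hQS, Polynomial.eval_mul, Polynomial.eval_pow, Polynomial.eval_sub,
              Polynomial.eval_X, Polynomial.eval_C] at h0
            have hpos : 0 < (x - α)^2 := pow_two_pos_of_ne_zero (sub_ne_zero.mpr hxα)
            exact (mul_nonneg_iff_of_pos_left hpos).mp h0
          have hSnn : ∀ x ∈ Set.Icc m M, 0 ≤ S.eval x := by
            intro x hx
            by_cases hxα : x = α
            · have hIoc : ∀ y ∈ Set.Ioc α M, 0 ≤ S.eval y := by
                intro y hy
                exact hSIcc' y ⟨le_of_lt (lt_trans hαm hy.1), hy.2⟩ (ne_of_gt hy.1)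
              have h := hclosnn S (Set.Ioc α M) hIoc x
              rw [closure_Ioc (ne_of_lt hαM)] at h
              exact h (by rw [hxα]; exact ⟨le_rfl, hαM.le⟩)
            · exact hSIcc' x hx hxα
          rw [hQS, map_mul, map_pow]
          refine hmul _ ?_ _ (ih S.natDegree hSlt S le_rfl hSnn)
          rw [haα α, pow_two]
          exact hsq _
    · -- complex root with nonzero imaginary part
      set γ := z.re with hγ
      set δ := z.im with hδ
      set q : ℝ[X] := (X - Polynomial.C γ)^2 + Polynomial.C (δ^2) with hq
      have hqmonic : q.Monic := by
        apply Polynomial.Monic.add_of_left ((Polynomial.monic_X_sub_C γ).pow 2)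
        have h1 : ((X - Polynomial.C γ)^2 : ℝ[X]).degree = 2 := by
          rw [Polynomial.degree_pow, Polynomial.degree_X_sub_C]
          rfl
        rw [h1]
        exact lt_of_le_of_lt Polynomial.degree_C_le (by decide)
      have hzform : z = (γ:ℂ) + (δ:ℂ) * Complex.I := (Complex.re_add_im z).symm
      have hconj : (starRingEnd ℂ) z = (γ:ℂ) - (δ:ℂ) * Complex.I := by
        apply Complex.ext <;> simp [hγ, hδ]
      have hCI : (Polynomial.C Complex.I)^2 = (-1 : ℂ[X]) := by
        rw [← map_pow, Complex.I_sq, map_neg, map_one]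
      have hmapq : q.map (algebraMap ℝ ℂ)
          = (X - Polynomial.C z) * (X - Polynomial.C ((starRingEnd ℂ) z)) := by
        rw [hconj, show z = (γ:ℂ) + (δ:ℂ)*Complex.I from hzform]
        simp only [hq, Polynomial.map_add, Polynomial.map_pow, Polynomial.map_sub,
          Polynomial.map_X, Polynomial.map_C, map_add, map_sub, map_mul, map_pow,
          Complex.coe_algebraMap, Complex.ofReal_pow]
        linear_combination (Polynomial.C (δ:ℂ))^2 * hCI
      have hdvd : q ∣ Q := by
        have h1 : (X - Polynomial.C z) ∣ Q.map (algebraMap ℝ ℂ) :=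
          Polynomial.dvd_iff_isRoot.mpr
            (by rwa [Polynomial.IsRoot, Polynomial.eval_map, ← Polynomial.aeval_def])
        have hconjroot : Polynomial.aeval ((starRingEnd ℂ) z) Q = 0 := by
          rw [Polynomial.aeval_conj, hza, map_zero]
        have h2 : (X - Polynomial.C ((starRingEnd ℂ) z)) ∣ Q.map (algebraMap ℝ ℂ) :=
          Polynomial.dvd_iff_isRoot.mpr
            (by rwa [Polynomial.IsRoot, Polynomial.eval_map, ← Polynomial.aeval_def])
        have hne : z - (starRingEnd ℂ) z ≠ 0 := by
          rw [sub_ne_zero]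
          intro h
          exact him (Complex.conj_eq_iff_im.mp h.symm)
        have hcop : IsCoprime (X - Polynomial.C z) (X - Polynomial.C ((starRingEnd ℂ) z)) :=
          Polynomial.isCoprime_X_sub_C_of_isUnit_sub (isUnit_iff_ne_zero.mpr hne)
        have h3 := hcop.mul_dvd h1 h2
        rw [← hmapq] at h3
        exact (Polynomial.map_dvd_map (algebraMap ℝ ℂ) hinj hqmonic).mp h3
      obtain ⟨S, hS⟩ := hdvd
      have hSne : S ≠ 0 := by rintro rfl; rw [mul_zero] at hS; exact hQ0 hS
      have hqne : q ≠ 0 := hqmonic.ne_zero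
      have hdegq : q.natDegree = 2 := by
        rw [hq, Polynomial.natDegree_add_C, Polynomial.natDegree_pow,
          Polynomial.natDegree_X_sub_C]
      have hdegQ2 : Q.natDegree = 2 + S.natDegree := by
        rw [hS, Polynomial.natDegree_mul hqne hSne, hdegq]
      have hSlt : S.natDegree < n := by omega
      have hδne : δ ≠ 0 := him
      have hqevalpos : ∀ x : ℝ, 0 < q.eval x := by
        intro x
        have h1 : q.eval x = (x - γ)^2 + δ^2 := by simp [hq]
        rw [h1]
        positivity
      have hSnn : ∀ x ∈ Set.Icc m M, 0 ≤ S.eval x := by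
        intro x hx
        have h0 := hQnn x hx
        rw [hS, Polynomial.eval_mul] at h0
        exact (mul_nonneg_iff_of_pos_left (hqevalpos x)).mp h0
      rw [hS, map_mul]
      refine hmul _ ?_ _ (ih S.natDegree hSlt S le_rfl hSnn)
      have hq' : Polynomial.aeval a q
          = (a - γ • (1:C)) * (a - γ • (1:C)) + (δ^2) • (1:C) := by
        simp only [hq, pow_two, map_add, map_mul, map_sub, Polynomial.aeval_X,
          Polynomial.aeval_C, Algebra.algebraMap_eq_smul_one]
        rw [smul_mul_smul_comm, mul_one]
      rw [hq']
      exact hadd _ (hsq _) _ (hsmul _ (sq_nonneg δ) _ hone)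
  exact key P.natDegree P le_rfl hP
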